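/- arXiv:1207.1305 — 2 statements merged into one kernel-verified Lean document; each statement's English description precedes it below -/
import Mathlib

section
/- Suppose (θ₁, θ₂, θ₃, θ₄) ∈ (0, 2π)⁴ with θ₁ + θ₂ = π = θ₃ + θ₄ satisfies the central configuration equations of the planar 1+4 body problem with positive mass parameters μ₁, μ₂, μ₃, μ₄. Then θ₁ = θ₄, θ₂ = θ₃, and μ₂ = μ₄. -/
open Real Set

noncomputable def f (x : ℝ) : ℝ := Real.sin x * (1 - 1 / (8 * Real.sin (x/2)^3))

noncomputable def fd (x : ℝ) : ℝ :=
  Real.cos x * (1 - 1 / (8 * Real.sin (x/2)^3)) +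
    Real.sin x * (3 * Real.cos (x/2) / (16 * Real.sin (x/2)^4))

lemma hasDerivAt_f (x : ℝ) (hx : Real.sin (x/2) ≠ 0) : HasDerivAt f (fd x) x := by
  have hhalf : HasDerivAt (fun y : ℝ => y / 2) (1/2) x := by
    simpa using (hasDerivAt_id x).div_const 2
  have hs : HasDerivAt (fun y : ℝ => Real.sin (y/2)) (Real.cos (x/2) * (1/2)) x :=
    by have := (Real.hasDerivAt_sin (x/2)).comp x hhalf; exact this
  have hs3 : HasDerivAt (fun y : ℝ => 8 * Real.sin (y/2)^3)
      (8 * (3 * Real.sin (x/2)^2 * (Real.cos (x/2) * (1/2)))) x := by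
    simpa [mul_comm, mul_assoc, mul_left_comm] using (hs.pow 3).const_mul (8:ℝ)
  have hden : 8 * Real.sin (x/2)^3 ≠ 0 := by
    simp [pow_eq_zero_iff, hx]
  have hinv : HasDerivAt (fun y : ℝ => 1 / (8 * Real.sin (y/2)^3))
      ((0 * (8 * Real.sin (x/2)^3) - 1 * (8 * (3 * Real.sin (x/2)^2 * (Real.cos (x/2) * (1/2))))) /
        (8 * Real.sin (x/2)^3)^2) x :=
    (hasDerivAt_const x (1:ℝ)).div hs3 hden
  have h1 : HasDerivAt (fun y : ℝ => 1 - 1 / (8 * Real.sin (y/2)^3))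
      (-((0 * (8 * Real.sin (x/2)^3) - 1 * (8 * (3 * Real.sin (x/2)^2 * (Real.cos (x/2) * (1/2))))) /
        (8 * Real.sin (x/2)^3)^2)) x := by
    have := (hasDerivAt_const x (1:ℝ)).sub hinv; exact this.congr_deriv (by ring)
  have := (Real.hasDerivAt_sin x).mul h1
  refine this.congr_deriv ?_
  unfold fd
  field_simp
  ring

lemma sin_half_gt {x : ℝ} (h1 : π/3 < x) (h2 : x < π) : 1/2 < Real.sin (x/2) := by
  have hpi := Real.pi_pos
  have : Real.sin (π/6) < Real.sin (x/2) := by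
    apply Real.strictMonoOn_sin ⟨by linarith, by linarith⟩ ⟨by linarith, by linarith⟩
    linarith
  rwa [Real.sin_pi_div_six] at this

lemma sin_half_lt {x : ℝ} (h1 : 0 < x) (h2 : x < π/3) : Real.sin (x/2) < 1/2 := by
  have hpi := Real.pi_pos
  have : Real.sin (x/2) < Real.sin (π/6) := by
    apply Real.strictMonoOn_sin ⟨by linarith, by linarith⟩ ⟨by linarith, by linarith⟩
    linarith
  rwa [Real.sin_pi_div_six] at this

lemma sin_half_pos {x : ℝ} (h1 : 0 < x) (h2 : x < π) : 0 < Real.sin (x/2) := by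
  have hpi := Real.pi_pos
  exact Real.sin_pos_of_pos_of_lt_pi (by linarith) (by linarith)

lemma f_pos {x : ℝ} (h1 : π/3 < x) (h2 : x < π) : 0 < f x := by
  have hpi := Real.pi_pos
  have hsx : 0 < Real.sin x := Real.sin_pos_of_pos_of_lt_pi (by linarith) h2
  have hs := sin_half_gt h1 h2
  have hs0 : 0 < Real.sin (x/2) := by linarith
  have h8 : 1 < 8 * Real.sin (x/2)^3 := by
    nlinarith [sq_nonneg (Real.sin (x/2) - 1/2), sq_nonneg (Real.sin (x/2) + 1/2)]
  have : 1 / (8 * Real.sin (x/2)^3) < 1 := by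
    rw [div_lt_one (by linarith)]; exact h8
  unfold f; nlinarith

lemma f_neg {x : ℝ} (h1 : 0 < x) (h2 : x < π/3) : f x < 0 := by
  have hpi := Real.pi_pos
  have hsx : 0 < Real.sin x := Real.sin_pos_of_pos_of_lt_pi h1 (by linarith)
  have hs := sin_half_lt h1 h2
  have hs0 : 0 < Real.sin (x/2) := sin_half_pos h1 (by linarith)
  have h8 : 8 * Real.sin (x/2)^3 < 1 := by
    nlinarith [sq_nonneg (Real.sin (x/2) - 1/2), sq_nonneg (Real.sin (x/2) + 1/2)]
  have h8' : 0 < 8 * Real.sin (x/2)^3 := by positivity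
  have : 1 < 1 / (8 * Real.sin (x/2)^3) := by
    rw [lt_div_iff₀ h8']; linarith
  unfold f; nlinarith

lemma f_eq_zero {x : ℝ} (h1 : 0 < x) (h2 : x < π) (h : f x = 0) : x = π/3 := by
  rcases lt_trichotomy x (π/3) with hc | hc | hc
  · exact absurd h (ne_of_lt (f_neg h1 hc))
  · exact hc
  · exact absurd h (ne_of_gt (f_pos hc h2))

lemma Npos {x : ℝ} (h1 : 0 < x) (h2 : x < π) :
    0 < fd x * f (π - x) + f x * fd (π - x) := by
  have hpi := Real.pi_pos
  have ha : 0 < Real.sin (x/2) :=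
    Real.sin_pos_of_pos_of_lt_pi (by linarith) (by linarith)
  have hb : 0 < Real.cos (x/2) :=
    Real.cos_pos_of_mem_Ioo ⟨by linarith, by linarith⟩
  have hone : Real.sin (x/2)^2 + Real.cos (x/2)^2 = 1 := Real.sin_sq_add_cos_sq _
  have hsin : Real.sin x = 2 * Real.sin (x/2) * Real.cos (x/2) := by
    have h := Real.sin_two_mul (x/2)
    rw [show 2*(x/2) = x by ring] at h
    linarith
  have hcos : Real.cos x = Real.cos (x/2)^2 - Real.sin (x/2)^2 := by
    have h := Real.cos_two_mul (x/2)
    rw [show 2*(x/2) = x by ring] at h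
    nlinarith
  have hh : (π - x)/2 = π/2 - x/2 := by ring
  unfold f fd
  rw [hh, Real.sin_pi_div_two_sub, Real.cos_pi_div_two_sub, Real.sin_pi_sub,
    Real.cos_pi_sub, hsin, hcos]
  set a := Real.sin (x/2)
  set b := Real.cos (x/2)
  have key : ((b^2 - a^2) * (1 - 1 / (8 * a^3)) +
        2 * a * b * (3 * b / (16 * a^4))) * (2 * a * b * (1 - 1 / (8 * b^3))) +
      2 * a * b * (1 - 1 / (8 * a^3)) *
        (-(b^2 - a^2) * (1 - 1 / (8 * b^3)) + 2 * a * b * (3 * a / (16 * b^4))) =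
      (8 * (b^2 - a^2) * (b^3 - a^3) + 8 * (a^3 + a^5 + b^3 + b^5) - 3) /
        (32 * a^2 * b^2) := by
    field_simp
    linear_combination (8192*b^3 - 3072 + 8192*a^3) * hone
  rw [key]
  apply div_pos _ (by positivity)
  have hfac : (b^2 - a^2) * (b^3 - a^3) = (b - a)^2 * (b + a) * (b^2 + a*b + a^2) := by
    ring
  have hfac0 : 0 ≤ (b - a)^2 * (b + a) * (b^2 + a*b + a^2) := by positivity
  have ha1 : a ≤ 1 := by nlinarith
  have hb1 : b ≤ 1 := by nlinarith
  have h4 : 0 ≤ a^3 * (1 - a) := mul_nonneg (by positivity) (by linarith)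
  have h5 : 0 ≤ b^3 * (1 - b) := mul_nonneg (by positivity) (by linarith)
  nlinarith [sq_nonneg (a^2 - b^2)]

lemma fpix_ne {x : ℝ} (h1 : 0 < x) (h2 : x < π) (h3 : x ≠ 2*π/3) : f (π - x) ≠ 0 := by
  have hpi := Real.pi_pos
  rcases lt_or_gt_of_ne h3 with hc | hc
  · exact (f_pos (by linarith) (by linarith)).ne'
  · exact (f_neg (by linarith) (by linarith)).ne

lemma hasDerivAt_q {x : ℝ} (h1 : 0 < x) (h2 : x < π) (h3 : x ≠ 2*π/3) :
    HasDerivAt (fun y => f y / f (π - y))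
      ((fd x * f (π - x) + f x * fd (π - x)) / (f (π - x))^2) x := by
  have hpi := Real.pi_pos
  have hx1 : Real.sin (x/2) ≠ 0 := (sin_half_pos h1 h2).ne'
  have hx2 : Real.sin ((π - x)/2) ≠ 0 := (sin_half_pos (by linarith) (by linarith)).ne'
  have hx3 : f (π - x) ≠ 0 := fpix_ne h1 h2 h3
  have hsub : HasDerivAt (fun y : ℝ => π - y) (-1) x := by
    simpa using (hasDerivAt_id x).const_sub π
  have hg : HasDerivAt (fun y => f (π - y)) (-(fd (π - x))) x := by
    have := (hasDerivAt_f (π - x) hx2).comp x hsub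
    exact this.congr_deriv (by ring)
  have := (hasDerivAt_f x hx1).div hg hx3
  exact this.congr_deriv (by ring)

lemma qmono {l u : ℝ} (hl : 0 ≤ l) (hu : u ≤ π) (hne : ∀ x ∈ Ioo l u, x ≠ 2*π/3) :
    StrictMonoOn (fun x => f x / f (π - x)) (Ioo l u) := by
  apply strictMonoOn_of_deriv_pos (convex_Ioo l u)
  · apply continuousOn_of_forall_continuousAt
    intro x hx
    exact (hasDerivAt_q (lt_of_le_of_lt hl hx.1) (lt_of_lt_of_le hx.2 hu)
      (hne x hx)).continuousAt
  · rw [interior_Ioo]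
    intro x hx
    have h1 : 0 < x := lt_of_le_of_lt hl hx.1
    have h2 : x < π := lt_of_lt_of_le hx.2 hu
    have h3 := hne x hx
    rw [(hasDerivAt_q h1 h2 h3).deriv]
    exact div_pos (Npos h1 h2)
      (lt_of_le_of_ne (sq_nonneg _) (Ne.symm (pow_ne_zero 2 (fpix_ne h1 h2 h3))))

lemma f_pi3 : f (π/3) = 0 := by
  unfold f
  rw [show π/3/2 = π/6 by ring, Real.sin_pi_div_six]
  norm_num

theorem stmt13 (θ₁ θ₂ θ₃ θ₄ μ₁ μ₂ μ₃ μ₄ : ℝ)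
    (h1 : θ₁ ∈ Ioo (0:ℝ) (2*π)) (h2 : θ₂ ∈ Ioo (0:ℝ) (2*π))
    (h3 : θ₃ ∈ Ioo (0:ℝ) (2*π)) (h4 : θ₄ ∈ Ioo (0:ℝ) (2*π))
    (hsum : θ₁ + θ₂ = π ∧ θ₃ + θ₄ = π)
    (hμ1 : 0 < μ₁) (hμ2 : 0 < μ₂) (hμ3 : 0 < μ₃) (hμ4 : 0 < μ₄)
    (e1 : μ₂ * f θ₁ = μ₄ * f θ₄)
    (e2 : μ₃ * f θ₂ + μ₄ * f (θ₂ + θ₃) = μ₁ * f θ₁)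
    (e3 : μ₄ * f θ₃ = μ₂ * f θ₂)
    (e4 : μ₁ * f θ₁ + μ₂ * f (θ₁ + θ₄) = μ₃ * f θ₃) :
    θ₁ = θ₄ ∧ θ₂ = θ₃ ∧ μ₂ = μ₄ := by
  have hpi := Real.pi_pos
  obtain ⟨hs12, hs34⟩ := hsum
  obtain ⟨ht0, _⟩ := h1
  obtain ⟨h20, _⟩ := h2
  obtain ⟨h30, _⟩ := h3
  obtain ⟨hs0, _⟩ := h4
  have htπ : θ₁ < π := by linarith
  have hsπ : θ₄ < π := by linarith
  have hθ2 : θ₂ = π - θ₁ := by linarith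
  have hθ3 : θ₃ = π - θ₄ := by linarith
  subst hθ2 hθ3
  have hkey : f θ₁ * f (π - θ₄) = f θ₄ * f (π - θ₁) := by
    apply mul_left_cancel₀ (mul_ne_zero hμ2.ne' hμ4.ne')
    linear_combination (μ₄ * f (π - θ₄)) * e1 + (μ₄ * f θ₄) * e3
  have hts : θ₁ = θ₄ := by
    rcases lt_trichotomy θ₁ (2*π/3) with hc1 | hc1 | hc1
    · rcases lt_trichotomy θ₄ (2*π/3) with hc2 | hc2 | hc2
      · -- both in Ioo 0 (2π/3)
        have hn1 : 0 < f (π - θ₁) := f_pos (by linarith) (by linarith)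
        have hn4 : 0 < f (π - θ₄) := f_pos (by linarith) (by linarith)
        have hq : f θ₁ / f (π - θ₁) = f θ₄ / f (π - θ₄) := by
          rw [div_eq_div_iff hn1.ne' hn4.ne']
          exact hkey
        exact (qmono (l := 0) (u := 2*π/3) le_rfl (by linarith)
          (fun x hx => hx.2.ne)).injOn ⟨ht0, hc1⟩ ⟨hs0, hc2⟩ hq
      · -- θ₄ = 2π/3 : f (π - θ₄) = 0
        exfalso
        have hz : f (π - θ₄) = 0 := by
          rw [show π - θ₄ = π/3 by rw [hc2]; ring]; exact f_pi3
        have hn1 : 0 < f (π - θ₁) := f_pos (by linarith) (by linarith)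
        have h4p : 0 < f θ₄ := f_pos (by rw [hc2]; linarith) hsπ
        rw [hz] at hkey
        nlinarith
      · -- mixed θ₁ < 2π/3 < θ₄ : contradiction via e3
        exfalso
        have hn1 : 0 < f (π - θ₁) := f_pos (by linarith) (by linarith)
        have hn4 : f (π - θ₄) < 0 := f_neg (by linarith) (by linarith)
        nlinarith
    · -- θ₁ = 2π/3
      have hz : f (π - θ₁) = 0 := by
        rw [show π - θ₁ = π/3 by rw [hc1]; ring]; exact f_pi3
      have h1p : 0 < f θ₁ := f_pos (by rw [hc1]; linarith) htπ
      rw [hz, mul_zero] at hkey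
      have hz4 : f (π - θ₄) = 0 := by
        rcases mul_eq_zero.mp hkey with h | h
        · exact absurd h h1p.ne'
        · exact h
      have := f_eq_zero (x := π - θ₄) (by linarith) (by linarith) hz4
      linarith
    · rcases lt_trichotomy θ₄ (2*π/3) with hc2 | hc2 | hc2
      · -- mixed θ₄ < 2π/3 < θ₁
        exfalso
        have hn1 : f (π - θ₁) < 0 := f_neg (by linarith) (by linarith)
        have hn4 : 0 < f (π - θ₄) := f_pos (by linarith) (by linarith)
        nlinarith
      · -- θ₄ = 2π/3
        have hz : f (π - θ₄) = 0 := by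
          rw [show π - θ₄ = π/3 by rw [hc2]; ring]; exact f_pi3
        have h4p : 0 < f θ₄ := f_pos (by rw [hc2]; linarith) hsπ
        rw [hz, mul_zero] at hkey
        have hz1 : f (π - θ₁) = 0 := by
          rcases mul_eq_zero.mp hkey.symm with h | h
          · exact absurd h h4p.ne'
          · exact h
        have := f_eq_zero (x := π - θ₁) (by linarith) (by linarith) hz1
        linarith
      · -- both in Ioo (2π/3) π
        have hn1 : f (π - θ₁) < 0 := f_neg (by linarith) (by linarith)
        have hn4 : f (π - θ₄) < 0 := f_neg (by linarith) (by linarith)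
        have hq : f θ₁ / f (π - θ₁) = f θ₄ / f (π - θ₄) := by
          rw [div_eq_div_iff hn1.ne hn4.ne]
          exact hkey
        exact (qmono (l := 2*π/3) (u := π) (by linarith) le_rfl
          (fun x hx => hx.1.ne')).injOn ⟨hc1, htπ⟩ ⟨hc2, hsπ⟩ hq
  refine ⟨hts, by rw [hts], ?_⟩
  rcases eq_or_ne (f θ₁) 0 with hf0 | hf0
  · have hθ13 : θ₁ = π/3 := f_eq_zero ht0 htπ hf0
    have hn1 : 0 < f (π - θ₁) := f_pos (by rw [hθ13]; linarith) (by linarith)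
    rw [← hts] at e3
    exact (mul_right_cancel₀ hn1.ne' e3).symm
  · rw [← hts] at e1
    exact mul_right_cancel₀ hf0 e1
end

section
/- The function h(x) = (-f(π + x) - f(x))/f(2x) is strictly decreasing on (π/6, π/2) and maps (π/6, π/2) bijectively onto (3√2/7, +∞), with h(x) → +∞ as x → π/6⁺ and h(x) → 3√2/7 as x → π/2⁻. -/
open Real Set

noncomputable def h (x : ℝ) : ℝ := (- f (π + x) - f x) / f ( 2*x)

noncomputable def g (u : ℝ) : ℝ := 2*(2+u) / (Real.sqrt (1+u) * (8*u^3 - 1))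

lemma sqrt2_sq : Real.sqrt 2 * Real.sqrt 2 = 2 := Real.mul_self_sqrt (by norm_num)

lemma g_one : g 1 = 3 * Real.sqrt 2 / 7 := by
  unfold g
  have h2 : (0:ℝ) < Real.sqrt 2 := Real.sqrt_pos.2 (by norm_num)
  rw [show (1:ℝ)+1 = 2 by norm_num]
  rw [div_eq_div_iff (by positivity) (by norm_num)]
  nlinarith [sqrt2_sq]

lemma sin_mem {x : ℝ} (hx : x ∈ Ioo (π/6) (π/2)) : Real.sin x ∈ Ioo (1/2 : ℝ) 1 := by
  obtain ⟨h1, h2⟩ := hx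
  have hpi := Real.pi_pos
  have hmono := Real.strictMonoOn_sin
  have e1 : Real.sin (π/6) < Real.sin x := by
    apply hmono ⟨by linarith, by linarith⟩ ⟨by linarith, le_of_lt h2⟩ h1
  have e2 : Real.sin x < Real.sin (π/2) := by
    apply hmono ⟨by linarith, le_of_lt h2⟩ ⟨by linarith, le_refl _⟩ h2
  rw [Real.sin_pi_div_six] at e1
  rw [Real.sin_pi_div_two] at e2
  exact ⟨e1, e2⟩

lemma h_eq {x : ℝ} (hx : x ∈ Ioo (π/6) (π/2)) : h x = g (Real.sin x) := by
  have hpi := Real.pi_pos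
  obtain ⟨hx1, hx2⟩ := hx
  have hs : 0 < Real.sin (x/2) := Real.sin_pos_of_pos_of_lt_pi (by linarith) (by linarith)
  have hc : 0 < Real.cos (x/2) := Real.cos_pos_of_mem_Ioo ⟨by linarith, by linarith⟩
  have hcosx : 0 < Real.cos x := Real.cos_pos_of_mem_Ioo ⟨by linarith, hx2⟩
  have hsinx : Real.sin x ∈ Ioo (1/2:ℝ) 1 := sin_mem ⟨hx1, hx2⟩
  set s := Real.sin (x/2) with hsdef
  set c := Real.cos (x/2) with hcdef
  have h1 : s^2 + c^2 = 1 := Real.sin_sq_add_cos_sq (x/2)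
  have hu : Real.sin x = 2*s*c := by
    rw [show x = 2*(x/2) by ring, Real.sin_two_mul]
  have hcx : Real.cos x = c^2 - s^2 := by
    rw [show x = 2*(x/2) by ring, Real.cos_two_mul]
    nlinarith [h1]
  have hslc : s < c := by nlinarith [hcx, hcosx]
  have hsqrt : Real.sqrt (1 + Real.sin x) = c + s := by
    rw [hu, show (1:ℝ) + 2*s*c = (c+s)^2 by linear_combination -h1, Real.sqrt_sq (by positivity)]
  have hsin2x : Real.sin (2*x) = 2 * Real.sin x * Real.cos x := Real.sin_two_mul x
  have hsinpx : Real.sin (π + x) = - Real.sin x := by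
    rw [Real.sin_add]; simp
  have hhalf : Real.sin ((π + x)/2) = c := by
    rw [show (π + x)/2 = π/2 + x/2 by ring, Real.sin_add]; simp [hcdef]
  have hD : (0:ℝ) < 8*(Real.sin x)^3 - 1 := by
    nlinarith [hsinx.1, sq_nonneg (Real.sin x - 1/2), sq_nonneg (Real.sin x + 1/2), sq_nonneg (Real.sin x)]
  have hsx : (0:ℝ) < Real.sin x := by nlinarith [hsinx.1]
  unfold h f g
  rw [show 2*x/2 = x by ring, hsin2x, hsinpx, hhalf, hsqrt]
  rw [hu, hcx]
  have hcs : (0:ℝ) < c + s := by linarith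
  have hc2s2 : (0:ℝ) < c^2 - s^2 := by nlinarith
  have hD' : (0:ℝ) < 8*(2*s*c)^3 - 1 := by rw [hu] at hD; linarith
  field_simp
  rw [← hsdef]
  linear_combination (c+s)*(c-s)/(2^3*s^3*c^3*8-1) * h1 + c^3*(c+s)/(2^3*s^3*c^3*8-1) * mul_one_div_cancel (pow_ne_zero 3 hs.ne')


lemma g_denom_pos {u : ℝ} (h1 : 1/2 < u) : 0 < Real.sqrt (1+u) * (8*u^3-1) := by
  have hD : (0:ℝ) < 8*u^3-1 := by nlinarith [sq_nonneg (u-1/2), sq_nonneg (u+1/2)]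
  have hs : (0:ℝ) < Real.sqrt (1+u) := Real.sqrt_pos.2 (by linarith)
  positivity

lemma g_pos {u : ℝ} (h1 : 1/2 < u) : 0 < g u := by
  have := g_denom_pos h1
  unfold g; positivity

set_option maxHeartbeats 1000000 in
lemma g_anti : StrictAntiOn g (Ioc (1/2:ℝ) 1) := by
  intro a ha b hb hab
  obtain ⟨ha1, _⟩ := ha; obtain ⟨hb1, _⟩ := hb
  have hga : 0 < g a := g_pos ha1
  have hgb : 0 < g b := g_pos hb1
  have hsq : g b ^ 2 < g a ^ 2 := by
    unfold g
    simp only [div_pow, mul_pow]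
    rw [Real.sq_sqrt (by linarith : (0:ℝ) ≤ 1 + a), Real.sq_sqrt (by linarith : (0:ℝ) ≤ 1 + b)]
    have hDa : (0:ℝ) < 8*a^3-1 := by nlinarith [sq_nonneg (a-1/2), sq_nonneg (a+1/2)]
    have hDb : (0:ℝ) < 8*b^3-1 := by nlinarith [sq_nonneg (b-1/2), sq_nonneg (b+1/2)]
    rw [div_lt_div_iff₀ (by positivity) (by positivity)]
    have hp : (0:ℝ) < a - 1/2 := by linarith
    have hq : (0:ℝ) < b - a := by linarith
    linarith [mul_pos (pow_pos hp 0) (pow_pos hq 2), mul_pos (pow_pos hp 0) (pow_pos hq 3), mul_pos (pow_pos hp 0) (pow_pos hq 4), mul_pos (pow_pos hp 0) (pow_pos hq 5), mul_pos (pow_pos hp 0) (pow_pos hq 6), mul_pos (pow_pos hp 0) (pow_pos hq 7), mul_pos (pow_pos hp 1) (pow_pos hq 1), mul_pos (pow_pos hp 1) (pow_pos hq 2), mul_pos (pow_pos hp 1) (pow_pos hq 3), mul_pos (pow_pos hp 1) (pow_pos hq 4), mul_pos (pow_pos hp 1) (pow_pos hq 5), mul_pos (pow_pos hp 1) (pow_pos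 hq 6), mul_pos (pow_pos hp 1) (pow_pos hq 7), mul_pos (pow_pos hp 2) (pow_pos hq 1), mul_pos (pow_pos hp 2) (pow_pos hq 2), mul_pos (pow_pos hp 2) (pow_pos hq 3), mul_pos (pow_pos hp 2) (pow_pos hq 4), mul_pos (pow_pos hp 2) (pow_pos hq 5), mul_pos (pow_pos hp 2) (pow_pos hq 6), mul_pos (pow_pos hp 2) (pow_pos hq 7), mul_pos (pow_pos hp 3) (pow_pos hq 1), mul_pos (pow_pos hp 3) (pow_pos hq 2), mul_pos (pow_pos hp 3) (pow_pos hq 3), mul_pos (pow_pos hp 3) (pow_pos hq 4), mul_pos (pow_pos hp 3) (pow_pos hq 5), mul_pos (pow_pos hp 3) (pow_pos hq 6), mul_pos (pow_pos hp 4) (pow_pos hq 1), mul_pos (pow_pos hp 4) (pow_pos hq 2), mul_pos (pow_pos hp 4) (pow_pos hq 3), mul_pos (pow_pos hp 4) (pow_pos hq 4), mul_pos (pow_pos hp 4) (pow_pos hq 5), mul_pos (pow_pos hp 5) (pow_pos hq 1), mul_pos (pow_pos hp 5) (pow_pos hq 2), mul_pos (pow_pos hp 5) (pow_pos hq 3),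 mul_pos (pow_pos hp 5) (pow_pos hq 4), mul_pos (pow_pos hp 6) (pow_pos hq 1), mul_pos (pow_pos hp 6) (pow_pos hq 2), mul_pos (pow_pos hp 6) (pow_pos hq 3), mul_pos (pow_pos hp 7) (pow_pos hq 1), mul_pos (pow_pos hp 7) (pow_pos hq 2), mul_pos (pow_pos hp 8) (pow_pos hq 1)]
  exact lt_of_pow_lt_pow_left₀ 2 hga.le hsq

lemma g_gt {u : ℝ} (hu : u ∈ Ioo (1/2:ℝ) 1) : 3 * Real.sqrt 2 / 7 < g u := by
  have := g_anti ⟨hu.1, hu.2.le⟩ (⟨by norm_num, le_refl 1⟩ : (1:ℝ) ∈ Ioc (1/2:ℝ) 1) hu.2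
  rwa [g_one] at this

lemma h_gt {x : ℝ} (hx : x ∈ Ioo (π/6) (π/2)) : 3 * Real.sqrt 2 / 7 < h x := by
  rw [h_eq hx]; exact g_gt (sin_mem hx)

lemma h_contOn : ContinuousOn h (Ioo (π/6) (π/2)) := by
  have hF : ContinuousOn (fun x => 2*(2+Real.sin x) /
      (Real.sqrt (1+Real.sin x) * (8*Real.sin x^3 - 1))) (Ioo (π/6) (π/2)) := by
    apply ContinuousOn.div
    · fun_prop
    · exact ((Real.continuous_sqrt.comp (by fun_prop)).mul (by fun_prop)).continuousOn
    · intro x hx; exact (g_denom_pos (sin_mem hx).1).ne'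
  exact hF.congr fun x hx => h_eq hx

lemma tend2 : Filter.Tendsto h (nhdsWithin (π/2) (Iio (π/2))) (nhds (3 * Real.sqrt 2 / 7)) := by
  have hpi := Real.pi_pos
  have hmem : Ioo (π/6) (π/2) ∈ nhdsWithin (π/2) (Iio (π/2)) :=
    Ioo_mem_nhdsLT_of_mem ⟨by linarith, le_refl _⟩
  have hc : ContinuousAt (fun x => g (Real.sin x)) (π/2) := by
    unfold g
    apply ContinuousAt.div
    · fun_prop
    · exact ((Real.continuous_sqrt.comp (by fun_prop)).mul (by fun_prop)).continuousAt
    · rw [Real.sin_pi_div_two]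
      have : (0:ℝ) < Real.sqrt (1+1) := Real.sqrt_pos.2 (by norm_num)
      positivity
  have ht : Filter.Tendsto (fun x => g (Real.sin x)) (nhds (π/2)) (nhds (3 * Real.sqrt 2 / 7)) := by
    have := hc.tendsto
    rwa [Real.sin_pi_div_two, g_one] at this
  refine (ht.mono_left nhdsWithin_le_nhds).congr' ?_
  filter_upwards [hmem] with x hx using (h_eq hx).symm

lemma tend1 : Filter.Tendsto h (nhdsWithin (π/6) (Ioi (π/6))) Filter.atTop := by
  have hpi := Real.pi_pos
  have hmem : Ioo (π/6) (π/2) ∈ nhdsWithin (π/6) (Ioi (π/6)) :=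
    Ioo_mem_nhdsGT_of_mem ⟨le_refl _, by linarith⟩
  have hnum : Filter.Tendsto (fun x => 2*(2+Real.sin x)) (nhdsWithin (π/6) (Ioi (π/6))) (nhds 5) := by
    have hc : ContinuousAt (fun x => 2*(2+Real.sin x)) (π/6) := by fun_prop
    have := hc.tendsto.mono_left (nhdsWithin_le_nhds (s := Ioi (π/6)))
    simpa [Real.sin_pi_div_six] using (by norm_num [Real.sin_pi_div_six] : 2*(2+Real.sin (π/6)) = 5) ▸ this
  have hden : Filter.Tendsto (fun x => Real.sqrt (1+Real.sin x) * (8*Real.sin x^3 - 1))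
      (nhdsWithin (π/6) (Ioi (π/6))) (nhdsWithin 0 (Ioi 0)) := by
    apply tendsto_nhdsWithin_of_tendsto_nhds_of_eventually_within
    · have hc : ContinuousAt (fun x => Real.sqrt (1+Real.sin x) * (8*Real.sin x^3 - 1)) (π/6) :=
        ((Real.continuous_sqrt.comp (by fun_prop)).mul (by fun_prop)).continuousAt
      have := hc.tendsto.mono_left (nhdsWithin_le_nhds (s := Ioi (π/6)))
      have hval : Real.sqrt (1+Real.sin (π/6)) * (8*Real.sin (π/6)^3 - 1) = 0 := by
        rw [Real.sin_pi_div_six]; norm_num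
      rwa [hval] at this
    · filter_upwards [hmem] with x hx using g_denom_pos (sin_mem hx).1
  have hinv : Filter.Tendsto (fun x => (Real.sqrt (1+Real.sin x) * (8*Real.sin x^3 - 1))⁻¹)
      (nhdsWithin (π/6) (Ioi (π/6))) Filter.atTop := hden.inv_tendsto_nhdsGT_zero
  have := hnum.pos_mul_atTop (by norm_num) hinv
  refine this.congr' ?_
  filter_upwards [hmem] with x hx
  rw [h_eq hx]; unfold g; rw [div_eq_mul_inv]

lemma h_image : h '' (Ioo (π/6) (π/2)) = Ioi (3 * Real.sqrt 2 / 7) := by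
  have hpi := Real.pi_pos
  apply Subset.antisymm
  · rintro y ⟨x, hx, rfl⟩
    exact h_gt hx
  · intro y hy
    rw [mem_Ioi] at hy
    obtain ⟨x₁, hx₁m, hx₁y⟩ : ∃ x₁, x₁ ∈ Ioo (π/6) (π/2) ∧ y < h x₁ := by
      have e1 : ∀ᶠ x in nhdsWithin (π/6) (Ioi (π/6)), y < h x := tend1.eventually_gt_atTop y
      have e2 : ∀ᶠ x in nhdsWithin (π/6) (Ioi (π/6)), x ∈ Ioo (π/6) (π/2) :=
        Ioo_mem_nhdsGT_of_mem ⟨le_refl _, by linarith⟩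
      exact (e2.and e1).exists
    obtain ⟨x₂, hx₂m, hx₂y⟩ : ∃ x₂, x₂ ∈ Ioo x₁ (π/2) ∧ h x₂ < y := by
      have e1 : ∀ᶠ x in nhdsWithin (π/2) (Iio (π/2)), h x < y := tend2.eventually_lt_const hy
      have e2 : ∀ᶠ x in nhdsWithin (π/2) (Iio (π/2)), x ∈ Ioo x₁ (π/2) :=
        Ioo_mem_nhdsLT_of_mem ⟨hx₁m.2, le_refl _⟩
      exact (e2.and e1).exists
    have hsub : Icc x₁ x₂ ⊆ Ioo (π/6) (π/2) :=
      fun t ht => ⟨lt_of_lt_of_le hx₁m.1 ht.1, lt_of_le_of_lt ht.2 hx₂m.2⟩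
    have hcont : ContinuousOn h (Icc x₁ x₂) := h_contOn.mono hsub
    have hIVT := intermediate_value_Icc' (le_of_lt hx₂m.1) hcont
    obtain ⟨x, hxm, hxy⟩ := hIVT ⟨hx₂y.le, hx₁y.le⟩
    exact ⟨x, hsub hxm, hxy⟩

lemma h_anti : StrictAntiOn h (Ioo (π/6) (π/2)) := by
  intro x hx y hy hxy
  have hpi := Real.pi_pos
  rw [h_eq hx, h_eq hy]
  have hsx := sin_mem hx
  have hsy := sin_mem hy
  have hlt : Real.sin x < Real.sin y := by
    apply Real.strictMonoOn_sin ⟨by linarith [hx.1], by linarith [hx.2]⟩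
      ⟨by linarith [hy.1], le_of_lt hy.2⟩ hxy
  exact g_anti ⟨hsx.1, hsx.2.le⟩ ⟨hsy.1, hsy.2.le⟩ hlt

theorem stmt18 :
    StrictAntiOn h (Ioo (π/6) (π/2)) ∧
    InjOn h (Ioo (π/6) (π/2)) ∧
    h '' (Ioo (π/6) (π/2)) = Ioi (3 * Real.sqrt 2 / 7) ∧
    Filter.Tendsto h (nhdsWithin (π/6) (Ioi (π/6))) Filter.atTop ∧
    Filter.Tendsto h (nhdsWithin (π/2) (Iio (π/2))) (nhds (3 * Real.sqrt 2 / 7)) :=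
  ⟨h_anti, h_anti.injOn, h_image, tend1, tend2⟩
end
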